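/- Let n ≥ 4 and let D = Σᵢ aᵢψᵢ − Σ_{I,J} b_{I,J} Δ_{I,J} in the ℚ-vector space generated by ψ_1,…,ψ_n and boundary symbols Δ_{I,J} modulo the Keel relations ψ_i + ψ_j = Σ_{i∈I, j∈J} Δ_{I,J}. Then D lies in the nonnegative cone spanned by the Δ_{I,J} if and only if there exists a ℚ-valued weighting w of the complete graph on [n] such that the flow through each vertex i equals aᵢ and the flow across each proper partition I ⊔ J is at least b_{I,J}. -/

import Mathlib

open Finset

/-- The ambient ℚ-vector space freely generated by the symbols `ψ_i` (for `i : Fin n`) and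
`Δ_I` (for `I : Finset (Fin n)`; only proper subsets in canonical position are used). -/
abbrev Amb (n : ℕ) := (Fin n ⊕ Finset (Fin n)) →₀ ℚ

noncomputable def psi {n : ℕ} (i : Fin n) : Amb n := Finsupp.single (Sum.inl i) 1

noncomputable def delta {n : ℕ} (I : Finset (Fin n)) : Amb n := Finsupp.single (Sum.inr I) 1

/-- Canonical representatives of proper partitions `I ⊔ J = [n]` (`|I|, |J| ≥ 2`): the part
containing the vertex with value `0`. -/
def reps (n : ℕ) : Finset (Finset (Fin n)) :=
  univ.filter (fun I => 2 ≤ I.card ∧ 2 ≤ Iᶜ.card ∧ ∀ j : Fin n, (j : ℕ) = 0 → j ∈ I)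

/-- The span of the Keel relations `ψ_i + ψ_j = Σ_{i ∈ I, j ∈ J} Δ_{I,J}` for `i ≠ j`. -/
noncomputable def keelRels (n : ℕ) : Submodule ℚ (Amb n) :=
  Submodule.span ℚ
    {x | ∃ i j : Fin n, i ≠ j ∧
      x = psi i + psi j -
        ∑ I ∈ (reps n).filter (fun I => (i ∈ I ∧ j ∉ I) ∨ (j ∈ I ∧ i ∉ I)), delta I}

section Aux
variable {n : ℕ}

noncomputable def rel (i j : Fin n) : Amb n :=
  psi i + psi j -
    ∑ I ∈ (reps n).filter (fun I => (i ∈ I ∧ j ∉ I) ∨ (j ∈ I ∧ i ∉ I)), delta I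

noncomputable def g (p : Fin n × Fin n) : Amb n :=
  if p.1 = p.2 then 0 else rel p.1 p.2

lemma mem_keelRels_iff (x : Amb n) :
    x ∈ keelRels n ↔ ∃ t : Fin n × Fin n → ℚ, ∑ p : Fin n × Fin n, t p • g p = x := by
  have hspan : keelRels n = Submodule.span ℚ (Set.range (g (n := n))) := by
    unfold keelRels
    apply le_antisymm <;> rw [Submodule.span_le]
    · rintro x ⟨i, j, hij, rfl⟩
      exact Submodule.subset_span ⟨(i, j), by simp [g, hij, rel]⟩
    · rintro x ⟨p, rfl⟩
      by_cases h : p.1 = p.2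
      · simp [g, h]
      · exact Submodule.subset_span ⟨p.1, p.2, h, by simp [g, h, rel]⟩
  rw [hspan, Submodule.mem_span_range_iff_exists_fun ℚ]


lemma g_apply_inl (p : Fin n × Fin n) (k : Fin n) :
    g p (Sum.inl k)
      = if p.1 = p.2 then 0 else ((if p.1 = k then (1:ℚ) else 0) + (if p.2 = k then 1 else 0)) := by
  rcases p with ⟨i, j⟩
  by_cases h : i = j
  · simp [g, h]
  · simp only [g, h, if_false, rel]
    rw [Finsupp.sub_apply (G := ℚ), Finsupp.add_apply]
    simp [psi, delta, Finsupp.single_apply, Finsupp.finset_sum_apply]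

lemma g_apply_inr (p : Fin n × Fin n) (K : Finset (Fin n)) :
    g p (Sum.inr K)
      = -(if K ∈ reps n ∧ ((p.1 ∈ K ∧ p.2 ∉ K) ∨ (p.2 ∈ K ∧ p.1 ∉ K)) then (1:ℚ) else 0) := by
  rcases p with ⟨i, j⟩
  by_cases h : i = j
  · subst h
    simp [g]
  · simp only [g, h, if_false, rel]
    rw [Finsupp.sub_apply (G := ℚ), Finsupp.add_apply]
    simp only [psi, delta, Finsupp.single_apply]
    rw [Finsupp.finset_sum_apply]
    have : ∀ I ∈ (reps n).filter (fun I => (i ∈ I ∧ j ∉ I) ∨ (j ∈ I ∧ i ∉ I)),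
        (Finsupp.single (Sum.inr I) (1:ℚ) : Amb n) (Sum.inr K)
          = if I = K then (1:ℚ) else 0 := by
      intro I _
      simp [Finsupp.single_apply]
    rw [Finset.sum_congr rfl this, Finset.sum_ite_eq']
    simp [Finset.mem_filter, and_assoc]


lemma sum_g_inl (t : Fin n × Fin n → ℚ) (k : Fin n) :
    (∑ p : Fin n × Fin n, t p • g p) (Sum.inl k)
      = ∑ j, (if k = j then 0 else t (k, j) + t (j, k)) := by
  rw [Finsupp.finset_sum_apply]
  simp only [Finsupp.smul_apply, smul_eq_mul, g_apply_inl]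
  rw [Fintype.sum_prod_type]
  have step : ∀ i j : Fin n,
      t (i, j) * (if i = j then 0 else ((if i = k then (1:ℚ) else 0) + (if j = k then 1 else 0)))
        = (if i = k then (if i = j then 0 else t (i, j)) else 0)
          + (if j = k then (if i = j then 0 else t (i, j)) else 0) := by
    intro i j; split_ifs <;> ring
  simp only [step]
  simp only [Finset.sum_add_distrib]
  have h1 : (∑ i : Fin n, ∑ j : Fin n, (if i = k then (if i = j then 0 else t (i, j)) else 0))
      = ∑ j : Fin n, (if k = j then 0 else t (k, j)) := by
    have pull : ∀ i : Fin n, (∑ j : Fin n, if i = k then (if i = j then 0 else t (i, j)) else 0)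
        = if i = k then (∑ j : Fin n, if i = j then 0 else t (i, j)) else 0 := by
      intro i; split_ifs <;> simp
    simp only [pull]
    rw [Finset.sum_ite_eq' Finset.univ k]
    simp
  have h2 : (∑ i : Fin n, ∑ j : Fin n, (if j = k then (if i = j then 0 else t (i, j)) else 0))
      = ∑ i : Fin n, (if i = k then 0 else t (i, k)) := by
    apply Finset.sum_congr rfl
    intro i _
    rw [Finset.sum_ite_eq' Finset.univ k (fun j => (if i = j then 0 else t (i, j)))]
    simp
  rw [h1, h2, ← Finset.sum_add_distrib]
  apply Finset.sum_congr rfl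
  intro j _
  by_cases h : k = j
  · simp [h]
  · rw [if_neg h, if_neg (fun hh : j = k => h hh.symm), if_neg h]

lemma sum_g_inr (t : Fin n × Fin n → ℚ) (K : Finset (Fin n)) :
    (∑ p : Fin n × Fin n, t p • g p) (Sum.inr K)
      = -(if K ∈ reps n then
          ∑ p ∈ Finset.univ.filter
            (fun p : Fin n × Fin n => (p.1 ∈ K ∧ p.2 ∉ K) ∨ (p.2 ∈ K ∧ p.1 ∉ K)), t p
        else 0) := by
  rw [Finsupp.finset_sum_apply]
  simp only [Finsupp.smul_apply, smul_eq_mul, g_apply_inr]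
  by_cases hK : K ∈ reps n
  · simp only [hK, true_and, if_true, Finset.sum_filter, mul_neg, mul_ite, mul_one, mul_zero,
      ← Finset.sum_neg_distrib]
  · simp [hK]


lemma D_inl (a : Fin n → ℚ) (b c : Finset (Fin n) → ℚ) (k : Fin n) :
    ((∑ i, a i • psi i - ∑ I ∈ reps n, b I • delta I) - ∑ I ∈ reps n, c I • delta I)
      (Sum.inl k) = a k := by
  simp only [Finsupp.sub_apply, Finsupp.finset_sum_apply, Finsupp.smul_apply, smul_eq_mul,
    psi, delta, Finsupp.single_apply]
  simp [Finset.sum_ite_eq']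

lemma D_inr (a : Fin n → ℚ) (b c : Finset (Fin n) → ℚ) (K : Finset (Fin n)) :
    ((∑ i, a i • psi i - ∑ I ∈ reps n, b I • delta I) - ∑ I ∈ reps n, c I • delta I)
      (Sum.inr K) = if K ∈ reps n then -(b K + c K) else 0 := by
  simp only [Finsupp.sub_apply, Finsupp.finset_sum_apply, Finsupp.smul_apply, smul_eq_mul,
    psi, delta, Finsupp.single_apply]
  have : ∀ (d : Finset (Fin n) → ℚ),
      (∑ I ∈ reps n, d I * (if (Sum.inr I : Fin n ⊕ Finset (Fin n)) = Sum.inr K then (1:ℚ) else 0))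
        = if K ∈ reps n then d K else 0 := by
    intro d
    rw [← Finset.sum_ite_eq' (reps n) K d]
    apply Finset.sum_congr rfl
    intro I _
    simp only [Sum.inr.injEq]
    split_ifs <;> simp_all
  rw [this b, this c]
  by_cases hK : K ∈ reps n <;> simp [hK] <;> try ring

lemma cut_sum (t : Fin n × Fin n → ℚ) (K : Finset (Fin n)) :
    (∑ p ∈ Finset.univ.filter
        (fun p : Fin n × Fin n => (p.1 ∈ K ∧ p.2 ∉ K) ∨ (p.2 ∈ K ∧ p.1 ∉ K)), t p)
      = ∑ i ∈ K, ∑ j ∈ Kᶜ, (t (i, j) + t (j, i)) := by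
  have hf : Finset.univ.filter
        (fun p : Fin n × Fin n => (p.1 ∈ K ∧ p.2 ∉ K) ∨ (p.2 ∈ K ∧ p.1 ∉ K))
      = (K ×ˢ Kᶜ) ∪ (Kᶜ ×ˢ K) := by
    ext p
    simp [Finset.mem_product, Finset.mem_compl]
    tauto
  have hdisj : Disjoint (K ×ˢ Kᶜ) (Kᶜ ×ˢ K) := by
    rw [Finset.disjoint_left]
    rintro ⟨i, j⟩ hp hq
    simp [Finset.mem_product, Finset.mem_compl] at hp hq
    exact hq.1 hp.1
  rw [hf, Finset.sum_union hdisj, Finset.sum_product, Finset.sum_product]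
  rw [Finset.sum_comm (s := Kᶜ) (t := K)]
  rw [← Finset.sum_add_distrib]
  apply Finset.sum_congr rfl
  intro i _
  rw [← Finset.sum_add_distrib]

end Aux

/-- Effectivity criterion: `D = Σ a_i ψ_i - Σ b_I Δ_I` is ℚ-linearly equivalent (modulo the
Keel relations) to an effective combination `Σ c_I Δ_I` with all `c_I ≥ 0` if and only if
there is a ℚ-valued weighting `w` of the complete graph on `[n]` with flow `a_i` through each
vertex `i` and flow at least `b_I` across each proper partition `I ⊔ Iᶜ`. -/
theorem effectivity_criterion_nonneg {n : ℕ} (hn : 4 ≤ n) (a : Fin n → ℚ)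
    (b : Finset (Fin n) → ℚ) :
    (∃ c : Finset (Fin n) → ℚ, (∀ I ∈ reps n, 0 ≤ c I) ∧
      ((∑ i, a i • psi i - ∑ I ∈ reps n, b I • delta I) - ∑ I ∈ reps n, c I • delta I)
        ∈ keelRels n)
    ↔ ∃ w : Fin n → Fin n → ℚ,
        (∀ i j, w i j = w j i) ∧ (∀ i, w i i = 0) ∧
        (∀ i, ∑ j, w i j = a i) ∧
        (∀ I ∈ reps n, ∑ i ∈ I, ∑ j ∈ Iᶜ, w i j ≥ b I) := by
  constructor
  · rintro ⟨c, hc, hmem⟩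
    rw [mem_keelRels_iff] at hmem
    obtain ⟨t, ht⟩ := hmem
    refine ⟨fun i j => if i = j then 0 else t (i, j) + t (j, i), ?_, ?_, ?_, ?_⟩
    · intro i j
      show (if i = j then 0 else t (i, j) + t (j, i)) = (if j = i then 0 else t (j, i) + t (i, j))
      by_cases h : i = j
      · simp [h]
      · rw [if_neg h, if_neg (Ne.symm h)]; ring
    · intro i; simp
    · intro i
      have h := congrArg (fun x : Amb n => x (Sum.inl i)) ht
      rw [sum_g_inl, D_inl] at h
      exact h
    · intro K hK
      have h := congrArg (fun x : Amb n => x (Sum.inr K)) ht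
      rw [sum_g_inr, D_inr, if_pos hK, if_pos hK, neg_inj, cut_sum] at h
      have hsum : (∑ i ∈ K, ∑ j ∈ Kᶜ, (if i = j then 0 else t (i, j) + t (j, i)))
          = ∑ i ∈ K, ∑ j ∈ Kᶜ, (t (i, j) + t (j, i)) := by
        apply Finset.sum_congr rfl
        intro i hi
        apply Finset.sum_congr rfl
        intro j hj
        have hij : i ≠ j := by
          intro hh; subst hh; exact (Finset.mem_compl.1 hj) hi
        rw [if_neg hij]
      have hb := hc K hK
      calc ∑ i ∈ K, ∑ j ∈ Kᶜ, (if i = j then 0 else t (i, j) + t (j, i))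
          = b K + c K := by rw [hsum, h]
        _ ≥ b K := by linarith
  · rintro ⟨w, hsymm, hdiag, hflow, hcut⟩
    refine ⟨fun K => (∑ i ∈ K, ∑ j ∈ Kᶜ, w i j) - b K, fun K hK => by
      have := hcut K hK
      show 0 ≤ (∑ i ∈ K, ∑ j ∈ Kᶜ, w i j) - b K
      linarith, ?_⟩
    rw [mem_keelRels_iff]
    refine ⟨fun p => w p.1 p.2 / 2, ?_⟩
    apply Finsupp.ext
    rintro (k | K)
    · rw [sum_g_inl, D_inl, ← hflow k]
      apply Finset.sum_congr rfl
      intro j _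
      by_cases h : k = j
      · subst h; simp [hdiag]
      · rw [if_neg h, hsymm j k]; ring
    · rw [sum_g_inr, D_inr]
      by_cases hK : K ∈ reps n
      · rw [if_pos hK, if_pos hK, cut_sum, neg_inj]
        have hterm : (∑ i ∈ K, ∑ j ∈ Kᶜ, (w i j / 2 + w j i / 2))
            = ∑ i ∈ K, ∑ j ∈ Kᶜ, w i j := by
          apply Finset.sum_congr rfl
          intro i _
          apply Finset.sum_congr rfl
          intro j _
          rw [hsymm j i]; ring
        rw [hterm]; ring
      · simp [hK]
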